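/- (Two-piece total variation.) Let f be a probability density on ℝ that is symmetric about 0 and unimodal with mode at 0 (f(−x) = f(x) and f nonincreasing on [0,∞)), and let γ ∈ (−1,1). Define the two-piece density s_tp(x;γ) = f(x/(1−γ)) for x < 0 and s_tp(x;γ) = f(x/(1+γ)) for x ≥ 0. Then the total variation distance between s_tp(·;γ) and f equals |γ|/2: (1/2) ∫_ℝ |s_tp(x;γ) − f(x)| dx = |γ|/2. -/
import Mathlib


open MeasureTheory Real

private theorem twopiece_tv_aux
    (f : ℝ → ℝ) (γ : ℝ) (hγ0 : 0 ≤ γ) (hγ1 : γ < 1)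
    (hf_meas : Measurable f) (hf_nonneg : ∀ x, 0 ≤ f x)
    (hf_int : Integrable f) (hf_one : ∫ x, f x = 1)
    (hf_even : ∀ x, f (-x) = f x)
    (hf_anti : AntitoneOn f (Set.Ici 0)) :
    ∫ x, |(if x < 0 then f (x / (1 - γ)) else f (x / (1 + γ))) - f x| = γ := by
  have h1p : (0:ℝ) < 1 + γ := by linarith
  have h1m : (0:ℝ) < 1 - γ := by linarith
  set A : ℝ → ℝ := fun x => f (x / (1 - γ)) with hA_def
  set B : ℝ → ℝ := fun x => f (x / (1 + γ)) with hB_def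
  have hA : Integrable A := hf_int.comp_div (ne_of_gt h1m)
  have hB : Integrable B := hf_int.comp_div (ne_of_gt h1p)
  -- integrability of the two-piece function
  have hg : Integrable (fun x => if x < 0 then A x else B x) := by
    have heq : (fun x => if x < 0 then A x else B x)
        = fun x => (Set.Iio (0:ℝ)).indicator A x + (Set.Ici (0:ℝ)).indicator B x := by
      funext x
      by_cases hx : x < 0
      · simp [Set.indicator, hx, not_le.mpr hx]
      · simp [Set.indicator, hx, not_lt.mp hx]
    rw [heq]
    exact (hA.indicator measurableSet_Iio).add (hB.indicator measurableSet_Ici)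
  have habs : Integrable (fun x => |(if x < 0 then A x else B x) - f x|) :=
    (hg.sub hf_int).abs
  -- halves
  have hIicIoi : ∫ x in Set.Iic (0:ℝ), f x = ∫ x in Set.Ioi (0:ℝ), f x := by
    have h1 : ∫ x in Set.Iic (0:ℝ), f x = ∫ x in Set.Iic (0:ℝ), f (-x) := by
      simp_rw [hf_even]
    rw [h1, integral_comp_neg_Iic, neg_zero]
  have hIoi : ∫ x in Set.Ioi (0:ℝ), f x = 1/2 := by
    have hsum := intervalIntegral.integral_Iic_add_Ioi (b := (0:ℝ))
      hf_int.integrableOn hf_int.integrableOn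
    rw [hf_one, hIicIoi] at hsum
    linarith
  have hIio : ∫ x in Set.Iio (0:ℝ), f x = 1/2 := by
    rw [← integral_Iic_eq_integral_Iio, hIicIoi, hIoi]
  -- scaling
  have hscale : ∀ c : ℝ, 0 < c → ∫ x in Set.Ioi (0:ℝ), f (x / c) = c * (1/2) := by
    intro c hc
    have h := integral_comp_mul_left_Ioi f 0 (inv_pos.mpr hc)
    simp only [mul_zero, inv_inv, smul_eq_mul] at h
    have h2 : ∀ x : ℝ, f (c⁻¹ * x) = f (x / c) := by
      intro x; rw [div_eq_inv_mul]
    simp_rw [h2] at h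
    rw [h, hIoi]
  -- reflection for scaled functions on Iio
  have hneg : ∀ c : ℝ, ∫ x in Set.Iio (0:ℝ), f (x / c) = ∫ x in Set.Ioi (0:ℝ), f (x / c) := by
    intro c
    have h1 : ∫ x in Set.Iic (0:ℝ), f (x / c) = ∫ x in Set.Iic (0:ℝ), f (-x / c) := by
      have : ∀ x : ℝ, f (-x / c) = f (x / c) := by
        intro x; rw [neg_div, hf_even]
      simp_rw [this]
    rw [← integral_Iic_eq_integral_Iio, h1,
      integral_comp_neg_Iic 0 (fun x => f (x / c)), neg_zero]
  -- pointwise identities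
  have hptIio : ∀ x ∈ Set.Iio (0:ℝ),
      |(if x < 0 then A x else B x) - f x| = f x - A x := by
    intro x hx
    have hx : x < 0 := hx
    rw [if_pos hx]
    have hle : A x ≤ f x := by
      have e1 : A x = f (-x / (1 - γ)) := by
        rw [hA_def]; simp only; rw [neg_div, hf_even]
      have hmem1 : -x / (1 - γ) ∈ Set.Ici (0:ℝ) :=
        div_nonneg (by linarith) (le_of_lt h1m)
      have hmem2 : -x ∈ Set.Ici (0:ℝ) := by simp; linarith
      have hle2 : -x ≤ -x / (1 - γ) := by
        rw [le_div_iff₀ h1m]; nlinarith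
      calc A x = f (-x / (1 - γ)) := e1
        _ ≤ f (-x) := hf_anti hmem2 hmem1 hle2
        _ = f x := hf_even x
    rw [abs_of_nonpos (by linarith), neg_sub]
  have hptIci : ∀ x ∈ Set.Ici (0:ℝ),
      |(if x < 0 then A x else B x) - f x| = B x - f x := by
    intro x hx
    have hx : (0:ℝ) ≤ x := hx
    rw [if_neg (not_lt.mpr hx)]
    have hle : f x ≤ B x := by
      have hmem1 : x / (1 + γ) ∈ Set.Ici (0:ℝ) :=
        div_nonneg hx (le_of_lt h1p)
      have hle2 : x / (1 + γ) ≤ x := by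
        rw [div_le_iff₀ h1p]; nlinarith
      exact hf_anti hmem1 hx hle2
    rw [abs_of_nonneg (by linarith)]
  -- split the integral
  have hsplit := intervalIntegral.integral_Iio_add_Ici (b := (0:ℝ))
    habs.integrableOn habs.integrableOn
  rw [← hsplit]
  have hI1 : ∫ x in Set.Iio (0:ℝ), |(if x < 0 then A x else B x) - f x| = γ / 2 := by
    rw [setIntegral_congr_fun measurableSet_Iio hptIio,
      integral_sub hf_int.integrableOn hA.integrableOn, hIio]
    have : ∫ x in Set.Iio (0:ℝ), A x = (1 - γ) * (1/2) := by
      rw [hA_def]; simp only; rw [hneg, hscale _ h1m]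
    rw [this]; ring
  have hI2 : ∫ x in Set.Ici (0:ℝ), |(if x < 0 then A x else B x) - f x| = γ / 2 := by
    rw [setIntegral_congr_fun measurableSet_Ici hptIci,
      integral_sub hB.integrableOn hf_int.integrableOn]
    have h1 : ∫ x in Set.Ici (0:ℝ), B x = (1 + γ) * (1/2) := by
      rw [hB_def]; simp only
      rw [integral_Ici_eq_integral_Ioi, hscale _ h1p]
    have h2 : ∫ x in Set.Ici (0:ℝ), f x = 1/2 := by
      rw [integral_Ici_eq_integral_Ioi, hIoi]
    rw [h1, h2]; ring
  rw [hI1, hI2]; ring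

/-- two-piece total variation: for f symmetric about 0 and
unimodal with mode at 0, and γ ∈ (−1,1), the total variation distance between
the two-piece density s_tp(·;γ) and f equals |γ|/2. -/
theorem twopiece_tv_distance
    (f : ℝ → ℝ) (γ : ℝ) (hγ : γ ∈ Set.Ioo (-1 : ℝ) 1)
    (hf_meas : Measurable f) (hf_nonneg : ∀ x, 0 ≤ f x)
    (hf_int : Integrable f) (hf_one : ∫ x, f x = 1)
    (hf_even : ∀ x, f (-x) = f x)
    (hf_anti : AntitoneOn f (Set.Ici 0)) :
    (1 / 2) * ∫ x, |(if x < 0 then f (x / (1 - γ)) else f (x / (1 + γ))) - f x|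
      = |γ| / 2 := by
  obtain ⟨hγl, hγr⟩ := hγ
  rcases le_or_gt 0 γ with hγ0 | hγ0
  · rw [twopiece_tv_aux f γ hγ0 hγr hf_meas hf_nonneg hf_int hf_one hf_even hf_anti,
      abs_of_nonneg hγ0]
    ring
  · have key : ∀ x : ℝ,
        |(if x < 0 then f (x / (1 - γ)) else f (x / (1 + γ))) - f x|
        = |(if -x < 0 then f (-x / (1 - -γ)) else f (-x / (1 + -γ))) - f (-x)| := by
      intro x
      rw [hf_even]
      rcases lt_trichotomy x 0 with h | h | h
      · rw [if_pos h, if_neg (by linarith)]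
        have e : -x / (1 + -γ) = -(x / (1 - γ)) := by ring
        rw [e, hf_even]
      · subst h
        norm_num
      · rw [if_neg (not_lt.mpr (le_of_lt h)), if_pos (by linarith)]
        have e : -x / (1 - -γ) = -(x / (1 + γ)) := by ring
        rw [e, hf_even]
    have heq : ∫ x, |(if x < 0 then f (x / (1 - γ)) else f (x / (1 + γ))) - f x|
        = ∫ x, |(if x < 0 then f (x / (1 - -γ)) else f (x / (1 + -γ))) - f x| := by
      calc ∫ x, |(if x < 0 then f (x / (1 - γ)) else f (x / (1 + γ))) - f x|
          = ∫ x, |(if -x < 0 then f (-x / (1 - -γ)) else f (-x / (1 + -γ))) - f (-x)| := by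
            congr 1; funext x; exact key x
        _ = ∫ x, |(if x < 0 then f (x / (1 - -γ)) else f (x / (1 + -γ))) - f x| :=
            integral_neg_eq_self
              (fun x => |(if x < 0 then f (x / (1 - -γ)) else f (x / (1 + -γ))) - f x|) volume
    rw [heq, twopiece_tv_aux f (-γ) (by linarith) (by linarith)
      hf_meas hf_nonneg hf_int hf_one hf_even hf_anti, abs_of_neg hγ0]
    ring
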